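/- Let V ≥ 0 be a real random variable, η > 0, and N_R ≥ 1 an integer. Suppose that conditionally on V = v, the random variable S has the Gamma-type conditional density f_{S|V}(s|v) = s^{N_R−1}(v + 1/η)^{N_R} e^{−(v+1/η)s}/Γ(N_R) for s ≥ 0. Then the unconditional CDF of S satisfies F_S(s) = 1 − e^{−s/η} ∑_{k=0}^{N_R−1} ∑_{m=0}^{k} (s^k / ((k−m)! m! η^{k−m})) · E[V^m e^{−sV}]. -/

import Mathlib

open Finset MeasureTheory ProbabilityTheory

lemma deriv_aux (n : ℕ) (x : ℝ) :
    HasDerivAt (fun x : ℝ => -(Real.exp (-x) * ∑ k ∈ Finset.range (n+1), x ^ k / k.factorial))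
      (Real.exp (-x) * x ^ n / n.factorial) x := by
  have hexp : HasDerivAt (fun x : ℝ => Real.exp (-x)) (-Real.exp (-x)) x := by
    simpa using (hasDerivAt_neg x).exp
  have hsum : HasDerivAt (fun x : ℝ => ∑ k ∈ Finset.range (n+1), x ^ k / k.factorial)
      (∑ k ∈ Finset.range (n+1), (k * x ^ (k-1)) / k.factorial) x := by
    apply HasDerivAt.fun_sum
    intro k _
    exact ((hasDerivAt_pow k x)).div_const _
  have h := ((hexp.fun_mul hsum)).fun_neg
  refine h.congr_deriv ?_
  have hD : (∑ k ∈ Finset.range (n+1), ((k : ℝ) * x ^ (k-1)) / k.factorial)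
      = ∑ i ∈ Finset.range n, x ^ i / i.factorial := by
    rw [Finset.sum_range_succ']
    simp only [Nat.cast_zero, zero_mul, Nat.factorial_zero, Nat.cast_one, zero_div, add_zero]
    apply Finset.sum_congr rfl
    intro i _
    have : ((i+1 : ℕ) : ℝ) ≠ 0 := by positivity
    rw [Nat.add_sub_cancel, Nat.factorial_succ]
    push_cast
    field_simp
  rw [hD, Finset.sum_range_succ]
  have hfac : (n.factorial : ℝ) ≠ 0 := by positivity
  field_simp
  ring

lemma gamma_Iic (n : ℕ) (t : ℝ) (ht : 0 ≤ t) :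
    (gammaMeasure ((n:ℝ)+1) 1 (Set.Iic t)).toReal
      = 1 - Real.exp (-t) * ∑ k ∈ Finset.range (n+1), t ^ k / k.factorial := by
  have ha : (0:ℝ) < (n:ℝ)+1 := by positivity
  have hP := isProbabilityMeasure_gammaMeasure ha one_pos
  rw [← measureReal_def, ← cdf_eq_real, cdf_gammaMeasure_eq_integral ha one_pos]
  have hg : Continuous (fun x : ℝ => Real.exp (-x) * x ^ n / n.factorial) := by
    continuity
  have hpt : ∀ x ∈ Set.Ioc 0 t, gammaPDFReal ((n:ℝ)+1) 1 x
      = Real.exp (-x) * x ^ n / n.factorial := by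
    intro x hx
    rw [gammaPDFReal, if_pos hx.1.le]
    rw [show ((n:ℝ)+1) - 1 = ((n:ℕ):ℝ) by ring, Real.rpow_natCast,
      Real.one_rpow, Real.Gamma_nat_eq_factorial, one_mul]
    ring
  have h0 : ∀ᵐ x ∂(volume.restrict (Set.Iic (0:ℝ))), gammaPDFReal ((n:ℝ)+1) 1 x = 0 := by
    have hne : ∀ᵐ x : ℝ ∂volume, x ≠ 0 := by
      refine (ae_iff.2 ?_)
      simpa using Real.volume_singleton (a := (0:ℝ))
    filter_upwards [ae_restrict_mem measurableSet_Iic, ae_restrict_of_ae hne] with x hx hne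
    rw [gammaPDFReal, if_neg (not_le.mpr (lt_of_le_of_ne hx hne))]
  have hint0 : IntegrableOn (gammaPDFReal ((n:ℝ)+1) 1) (Set.Iic 0) volume :=
    (integrable_zero _ _ _).congr (h0.mono fun x hx => hx.symm)
  have hint1 : IntegrableOn (gammaPDFReal ((n:ℝ)+1) 1) (Set.Ioc 0 t) volume := by
    apply hg.integrableOn_Ioc.congr
    filter_upwards [ae_restrict_mem measurableSet_Ioc] with x hx
    exact (hpt x hx).symm
  have hz : ∫ x in Set.Iic (0:ℝ), gammaPDFReal ((n:ℝ)+1) 1 x = 0 :=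
    integral_eq_zero_of_ae h0
  rw [← Set.Iic_union_Ioc_eq_Iic ht,
    setIntegral_union (Set.Iic_disjoint_Ioc le_rfl) measurableSet_Ioc hint0 hint1, hz, zero_add,
    setIntegral_congr_fun measurableSet_Ioc hpt, ← intervalIntegral.integral_of_le ht]
  have hftc := intervalIntegral.integral_eq_sub_of_hasDerivAt
    (f := fun x : ℝ => -(Real.exp (-x) * ∑ k ∈ Finset.range (n+1), x ^ k / k.factorial))
    (fun x _ => deriv_aux n x) (hg.intervalIntegrable 0 t)
  have h00 : ∑ k ∈ Finset.range (n+1), (0:ℝ) ^ k / k.factorial = 1 := by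
    rw [Finset.sum_range_succ']; simp
  rw [hftc]
  simp only [neg_zero, Real.exp_zero, one_mul, h00]
  ring

lemma expand_aux (N : ℕ) (η s v : ℝ) (hη : 0 < η) :
    Real.exp (-(s*(v+1/η))) * ∑ k ∈ Finset.range N, (s*(v+1/η))^k / k.factorial
    = ∑ k ∈ Finset.range N, ∑ m ∈ Finset.range (k+1),
        Real.exp (-s/η) * (s^k / ((k-m).factorial * m.factorial * η^(k-m))) *
          (v^m * Real.exp (-s*v)) := by
  rw [Finset.mul_sum]
  apply Finset.sum_congr rfl
  intro k _
  have hsplit : Real.exp (-(s*(v+1/η))) = Real.exp (-s/η) * Real.exp (-s*v) := by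
    rw [← Real.exp_add]; ring_nf
  rw [hsplit, mul_pow, add_pow, Finset.mul_sum, Finset.sum_div, Finset.mul_sum]
  apply Finset.sum_congr rfl
  intro m hm
  have hmk : m ≤ k := Nat.lt_succ_iff.mp (Finset.mem_range.mp hm)
  have hcast : ((k.choose m : ℕ):ℝ) * m.factorial * (k-m).factorial = k.factorial := by
    exact_mod_cast congrArg (Nat.cast : ℕ → ℝ) (Nat.choose_mul_factorial_mul_factorial hmk)
  have h1 : ((k-m).factorial : ℝ) ≠ 0 := by positivity
  have h2 : (m.factorial : ℝ) ≠ 0 := by positivity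
  have h3 : (k.factorial : ℝ) ≠ 0 := by positivity
  have h4 : η ≠ 0 := hη.ne'
  field_simp
  have hP : (1/η)^(k-m) * η^(k-m) = 1 := by rw [← mul_pow, one_div_mul_cancel h4, one_pow]
  linear_combination (s^k*v^m*(k.choose m : ℝ)*(m.factorial:ℝ)*((k-m).factorial:ℝ)) * hP + s^k*v^m * hcast

lemma bound_aux (m : ℕ) (s v : ℝ) (hs : 0 < s) (hv : 0 ≤ v) :
    v ^ m * Real.exp (-s*v) ≤ m.factorial / s ^ m := by
  have hx : 0 ≤ s * v := by positivity
  have h1 : (s*v)^m / m.factorial ≤ Real.exp (s*v) := by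
    refine le_trans ?_ (Real.sum_le_exp_of_nonneg hx (m+1))
    refine Finset.single_le_sum (f := fun i => (s*v)^i / i.factorial) ?_ (Finset.self_mem_range_succ m)
    intro i _; positivity
  have h2 : (s*v)^m ≤ Real.exp (s*v) * m.factorial := by
    rwa [div_le_iff₀ (by positivity)] at h1
  have h3 : s^m * (v^m * Real.exp (-s*v)) ≤ m.factorial := by
    calc s^m * (v^m * Real.exp (-s*v)) = (s*v)^m * Real.exp (-(s*v)) := by
          rw [mul_pow]; ring_nf
      _ ≤ (Real.exp (s*v) * m.factorial) * Real.exp (-(s*v)) := by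
          gcongr
      _ = m.factorial := by
          rw [Real.exp_neg]; field_simp
  rw [le_div_iff₀ (by positivity)]
  linarith [h3]

/-- The probabilistic core of Theorem 3.2 of the paper: the CDF of
S = X/(V + 1/η) where X ∼ Gamma(N_R, 1) is independent of the nonnegative
random variable V (equivalently, given V = v, S has the stated Gamma-type
conditional density with rate v + 1/η). -/
theorem stmt_8 (NR : ℕ) (hNR : 1 ≤ NR) (η : ℝ) (hη : 0 < η)
    {Ω : Type*} [MeasureSpace Ω] [IsProbabilityMeasure (ℙ : Measure Ω)]
    (V Xg : Ω → ℝ) (hV : ∀ ω, 0 ≤ V ω)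
    (hVmeas : Measurable V) (hXmeas : Measurable Xg)
    (hgamma : Measure.map Xg ℙ = gammaMeasure NR 1)
    (hindep : IndepFun Xg V ℙ)
    (S : Ω → ℝ) (hS : ∀ ω, S ω = Xg ω / (V ω + 1 / η))
    (s : ℝ) (hs : 0 ≤ s) :
    (ℙ {ω | S ω ≤ s}).toReal =
      1 - Real.exp (-s / η) *
        ∑ k ∈ Finset.range NR, ∑ m ∈ Finset.range (k + 1),
          s ^ k / ((k - m).factorial * m.factorial * η ^ (k - m)) *
            ∫ ω, (V ω) ^ m * Real.exp (-s * V ω) ∂ℙ := by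
  obtain ⟨n, rfl⟩ : ∃ n, NR = n + 1 := ⟨NR - 1, (Nat.succ_pred_eq_of_pos hNR).symm⟩
  rw [show ((n+1:ℕ):ℝ) = (n:ℝ)+1 by push_cast; ring] at hgamma
  have ha : (0:ℝ) < (n:ℝ)+1 := by positivity
  haveI hPG : IsProbabilityMeasure (gammaMeasure ((n:ℝ)+1) 1) :=
    isProbabilityMeasure_gammaMeasure ha one_pos
  set μV := Measure.map V ℙ with hμV
  haveI : IsProbabilityMeasure μV := Measure.isProbabilityMeasure_map hVmeas.aemeasurable
  have hVae : ∀ᵐ v ∂μV, 0 ≤ v := by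
    rw [ae_iff]
    have : {v : ℝ | ¬ 0 ≤ v} = Set.Iio 0 := by ext v; simp [not_le]
    rw [this, hμV, Measure.map_apply hVmeas measurableSet_Iio]
    have : V ⁻¹' Set.Iio 0 = ∅ := by
      ext ω; simp [Set.mem_Iio, not_lt.mpr (hV ω)]
    rw [this, measure_empty]
  set A : Set (ℝ × ℝ) := {p : ℝ × ℝ | p.1 ≤ s * (p.2 + 1/η)} with hAdef
  have hA : MeasurableSet A :=
    measurableSet_le measurable_fst ((measurable_snd.add_const _).const_mul s)
  have hset : {ω | S ω ≤ s} = (fun ω => (Xg ω, V ω)) ⁻¹' A := by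
    ext ω
    simp only [Set.mem_setOf_eq, Set.mem_preimage, hS ω, hAdef]
    rw [div_le_iff₀ (by have := hV ω; positivity)]
  have hmap : Measure.map (fun ω => (Xg ω, V ω)) ℙ = (gammaMeasure ((n:ℝ)+1) 1).prod μV := by
    rw [← hgamma, hμV]
    exact (indepFun_iff_map_prod_eq_prod_map_map hXmeas.aemeasurable hVmeas.aemeasurable).mp hindep
  have key : ℙ {ω | S ω ≤ s}
      = ∫⁻ v, gammaMeasure ((n:ℝ)+1) 1 (Set.Iic (s*(v+1/η))) ∂μV := by
    rw [hset, ← Measure.map_apply (hXmeas.prodMk hVmeas) hA, hmap,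
      Measure.prod_apply_symm hA]
    rfl
  have hmeasg : Measurable (fun v => gammaMeasure ((n:ℝ)+1) 1 (Set.Iic (s*(v+1/η)))) := by
    have := measurable_measure_prodMk_right (μ := gammaMeasure ((n:ℝ)+1) 1) hA
    convert this using 2
    rfl
  have hLHS : (ℙ {ω | S ω ≤ s}).toReal
      = ∫ ω, (1 - Real.exp (-(s*(V ω+1/η))) *
          ∑ k ∈ Finset.range (n+1), (s*(V ω+1/η))^k / k.factorial) ∂ℙ := by
    rw [key, ← integral_toReal hmeasg.aemeasurable (ae_of_all _ fun v => measure_lt_top _ _)]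
    have hcont : Continuous (fun v : ℝ => 1 - Real.exp (-(s*(v+1/η))) *
        ∑ k ∈ Finset.range (n+1), (s*(v+1/η))^k / k.factorial) := by
      continuity
    rw [show (∫ ω, (1 - Real.exp (-(s*(V ω+1/η))) *
          ∑ k ∈ Finset.range (n+1), (s*(V ω+1/η))^k / k.factorial) ∂ℙ)
        = ∫ v, (1 - Real.exp (-(s*(v+1/η))) *
          ∑ k ∈ Finset.range (n+1), (s*(v+1/η))^k / k.factorial) ∂μV from
      (integral_map hVmeas.aemeasurable hcont.aestronglyMeasurable).symm]
    refine integral_congr_ae ?_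
    filter_upwards [hVae] with v hv
    exact gamma_Iic n (s*(v+1/η)) (mul_nonneg hs (add_nonneg hv (by positivity)))
  rcases hs.eq_or_lt with hs0 | hspos
  · -- s = 0
    subst hs0
    have h00 : ∑ k ∈ Finset.range (n+1), (0:ℝ)^k / k.factorial = 1 := by
      rw [Finset.sum_range_succ']; simp
    have hz : ∀ ω : Ω, (1 - Real.exp (-((0:ℝ)*(V ω+1/η))) *
        ∑ k ∈ Finset.range (n+1), ((0:ℝ)*(V ω+1/η))^k / k.factorial) = 0 := by
      intro ω
      simp only [zero_mul, neg_zero, Real.exp_zero, one_mul, h00, sub_self]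
    rw [hLHS, integral_congr_ae (ae_of_all _ hz), integral_zero]
    have hsum1 : ∑ k ∈ Finset.range (n+1), ∑ m ∈ Finset.range (k+1),
        (0:ℝ)^k / ((k-m).factorial * m.factorial * η^(k-m)) *
          ∫ ω, (V ω)^m * Real.exp (-(0:ℝ) * V ω) ∂ℙ = 1 := by
      rw [Finset.sum_range_succ']
      have hzero : ∀ i ∈ Finset.range n, (∑ m ∈ Finset.range ((i+1)+1),
          (0:ℝ)^(i+1) / (((i+1)-m).factorial * m.factorial * η^((i+1)-m)) *
            ∫ ω, (V ω)^m * Real.exp (-(0:ℝ) * V ω) ∂ℙ) = 0 := by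
        intro i _
        apply Finset.sum_eq_zero
        intro m _
        rw [zero_pow (Nat.succ_ne_zero i), zero_div, zero_mul]
      rw [Finset.sum_eq_zero hzero, zero_add]
      simp
    simp only [neg_zero, zero_div, Real.exp_zero, one_mul] at hsum1 ⊢
    rw [hsum1]
    norm_num
  · -- s > 0
    have hintm : ∀ m : ℕ, Integrable (fun ω => (V ω)^m * Real.exp (-s * V ω)) ℙ := by
      intro m
      refine Integrable.mono' (integrable_const ((m.factorial : ℝ) / s^m))
        (((hVmeas.pow_const m).mul ((hVmeas.const_mul (-s)).exp)).aestronglyMeasurable) ?_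
      refine ae_of_all _ fun ω => ?_
      have h := bound_aux m s (V ω) hspos (hV ω)
      rw [Real.norm_eq_abs, abs_of_nonneg (mul_nonneg (pow_nonneg (hV ω) m) (Real.exp_nonneg _))]
      exact h
    have hintsum : Integrable (fun ω => ∑ k ∈ Finset.range (n+1), ∑ m ∈ Finset.range (k+1),
        Real.exp (-s/η) * (s^k / ((k-m).factorial * m.factorial * η^(k-m))) *
          ((V ω)^m * Real.exp (-s*V ω))) ℙ := by
      refine integrable_finset_sum _ fun k _ => integrable_finset_sum _ fun m _ => ?_
      exact (hintm m).const_mul _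
    rw [hLHS]
    have heq : ∀ ω, (1 - Real.exp (-(s*(V ω+1/η))) *
          ∑ k ∈ Finset.range (n+1), (s*(V ω+1/η))^k / k.factorial)
        = 1 - ∑ k ∈ Finset.range (n+1), ∑ m ∈ Finset.range (k+1),
            Real.exp (-s/η) * (s^k / ((k-m).factorial * m.factorial * η^(k-m))) *
              ((V ω)^m * Real.exp (-s*V ω)) := by
      intro ω
      rw [expand_aux (n+1) η s (V ω) hη]
    rw [integral_congr_ae (ae_of_all _ heq), integral_sub (integrable_const 1) hintsum,
      integral_const]
    simp only [measure_univ, probReal_univ, ENNReal.toReal_one, smul_eq_mul, mul_one, one_mul]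
    congr 1
    rw [integral_finset_sum _ fun k _ => integrable_finset_sum _ fun m _ => (hintm m).const_mul _,
      Finset.mul_sum]
    refine Finset.sum_congr rfl fun k _ => ?_
    rw [integral_finset_sum _ fun m _ => (hintm m).const_mul _, Finset.mul_sum]
    refine Finset.sum_congr rfl fun m _ => ?_
    rw [integral_const_mul]
    ring
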